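/- Every two-dimensional rectangular finite word (block) has a unique primitive root: if q has two roots r₁ and r₂ (meaning q = r₁^{n₁×m₁} and q = r₂^{n₂×m₂} as rectangular tilings), then there exists a block r that is a root of both r₁ and r₂. -/

import Mathlib

/-- `r` (of size `w' × h'`) is a root of the block `q` (of size `w × h`):
`q` is tiled by copies of `r`. -/
def IsRoot {α : Type*} (w' h' : ℕ) (r : ℕ → ℕ → α) (w h : ℕ) (q : ℕ → ℕ → α) : Prop :=
  0 < w' ∧ 0 < h' ∧ (∃ n : ℕ, 0 < n ∧ w = n * w') ∧ (∃ m : ℕ, 0 < m ∧ h = m * h') ∧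
    ∀ x < w, ∀ y < h, q x y = r (x % w') (y % h')

/-- A word of length `w` that is fully periodic with periods `p1` and `p2`
(both dividing `w`) is fully periodic with period `gcd p1 p2`. -/
lemma key_gcd {α : Type*} {w : ℕ} (hw : 0 < w) (p1 p2 : ℕ) (hd1 : p1 ∣ w) (hd2 : p2 ∣ w)
    (f : ℕ → α) (hf1 : ∀ x < w, f x = f (x % p1)) (hf2 : ∀ x < w, f x = f (x % p2)) :
    ∀ x < w, f x = f (x % Nat.gcd p1 p2) := by
  haveI : NeZero w := ⟨hw.ne'⟩
  set F : ZMod w → α := fun z => f z.val with hF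
  have step : ∀ p : ℕ, p ∣ w → (∀ x < w, f x = f (x % p)) →
      ∀ z : ZMod w, F (z + (p : ZMod w)) = F z := by
    intro p hpw hf z
    show f ((z + (p : ZMod w)).val) = f z.val
    rw [hf _ (ZMod.val_lt _), hf _ (ZMod.val_lt z)]
    congr 1
    have hv : (z + (p : ZMod w)).val = (z.val + p % w) % w := by
      rw [ZMod.val_add, ZMod.val_natCast]
    rw [hv, Nat.mod_mod_of_dvd _ hpw, Nat.add_mod, Nat.mod_mod_of_dvd p hpw,
      Nat.mod_self, Nat.add_zero, Nat.mod_mod_of_dvd _ (dvd_refl p)]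
  have multZ : ∀ (c : ZMod w), (∀ z, F (z + c) = F z) →
      ∀ (n : ℤ) (z : ZMod w), F (z + ((n : ℤ) : ZMod w) * c) = F z := by
    intro c hc n
    induction n using Int.induction_on with
    | zero => intro z; simp
    | succ n ih =>
        intro z
        have e : z + (((n : ℤ) + 1 : ℤ) : ZMod w) * c
            = (z + (((n : ℤ) : ℤ) : ZMod w) * c) + c := by push_cast; ring
        rw [e, hc, ih]
    | pred n ih =>
        intro z
        have e : (z + ((-(n : ℤ) - 1 : ℤ) : ZMod w) * c) + c
            = z + ((-(n : ℤ) : ℤ) : ZMod w) * c := by push_cast; ring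
        calc F (z + ((-(n : ℤ) - 1 : ℤ) : ZMod w) * c)
            = F ((z + ((-(n : ℤ) - 1 : ℤ) : ZMod w) * c) + c) := (hc _).symm
          _ = F (z + ((-(n : ℤ) : ℤ) : ZMod w) * c) := by rw [e]
          _ = F z := ih z
  have gcdstep : ∀ z : ZMod w, F (z + (Nat.gcd p1 p2 : ZMod w)) = F z := by
    intro z
    have hbez : ((Nat.gcd p1 p2 : ℕ) : ZMod w)
        = ((Nat.gcdA p1 p2 : ℤ) : ZMod w) * (p1 : ZMod w)
          + ((Nat.gcdB p1 p2 : ℤ) : ZMod w) * (p2 : ZMod w) := by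
      have h := Nat.gcd_eq_gcd_ab p1 p2
      have h2 : ((Nat.gcd p1 p2 : ℤ) : ZMod w)
          = (((p1 : ℤ) * Nat.gcdA p1 p2 + (p2 : ℤ) * Nat.gcdB p1 p2 : ℤ) : ZMod w) := by
        rw [← h]
      push_cast at h2 ⊢
      linear_combination h2
    calc F (z + (Nat.gcd p1 p2 : ZMod w))
        = F ((z + ((Nat.gcdA p1 p2 : ℤ) : ZMod w) * (p1 : ZMod w))
              + ((Nat.gcdB p1 p2 : ℤ) : ZMod w) * (p2 : ZMod w)) := by
          rw [hbez]; ring_nf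
      _ = F (z + ((Nat.gcdA p1 p2 : ℤ) : ZMod w) * (p1 : ZMod w)) :=
          multZ _ (step p2 hd2 hf2) _ _
      _ = F z := multZ _ (step p1 hd1 hf1) _ _
  have multN : ∀ (k : ℕ) (z : ZMod w), F (z + (k : ZMod w) * (Nat.gcd p1 p2 : ZMod w)) = F z := by
    intro k
    induction k with
    | zero => intro z; simp
    | succ k ih =>
        intro z
        have e : z + ((k + 1 : ℕ) : ZMod w) * (Nat.gcd p1 p2 : ZMod w)
            = (z + (k : ZMod w) * (Nat.gcd p1 p2 : ZMod w)) + (Nat.gcd p1 p2 : ZMod w) := by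
          push_cast; ring
        rw [e, gcdstep, ih]
  intro x hx
  have hm : x % Nat.gcd p1 p2 < w := lt_of_le_of_lt (Nat.mod_le _ _) hx
  have h1' : f x = F (x : ZMod w) := by
    simp only [hF]; rw [ZMod.val_natCast_of_lt hx]
  have h2' : f (x % Nat.gcd p1 p2) = F ((x % Nat.gcd p1 p2 : ℕ) : ZMod w) := by
    simp only [hF]; rw [ZMod.val_natCast_of_lt hm]
  have e : (x : ZMod w) = ((x % Nat.gcd p1 p2 : ℕ) : ZMod w)
      + ((x / Nat.gcd p1 p2 : ℕ) : ZMod w) * (Nat.gcd p1 p2 : ZMod w) := by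
    conv_lhs => rw [show x = x % Nat.gcd p1 p2 + x / Nat.gcd p1 p2 * Nat.gcd p1 p2 from
      (Nat.mod_add_div' x _).symm]
    push_cast; ring
  rw [h1', h2', e, multN]

theorem stmt5 {α : Type*} (w h : ℕ) (q : ℕ → ℕ → α)
    (w1 h1 : ℕ) (r1 : ℕ → ℕ → α) (w2 h2 : ℕ) (r2 : ℕ → ℕ → α)
    (h1root : IsRoot w1 h1 r1 w h q) (h2root : IsRoot w2 h2 r2 w h q) :
    ∃ (w' h' : ℕ) (r : ℕ → ℕ → α),
      IsRoot w' h' r w1 h1 r1 ∧ IsRoot w' h' r w2 h2 r2 := by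
  obtain ⟨hw1, hh1, ⟨n1, hn1, hwn1⟩, ⟨m1, hm1, hhm1⟩, hq1⟩ := h1root
  obtain ⟨hw2, hh2, ⟨n2, hn2, hwn2⟩, ⟨m2, hm2, hhm2⟩, hq2⟩ := h2root
  have hw : 0 < w := hwn1 ▸ Nat.mul_pos hn1 hw1
  have hh : 0 < h := hhm1 ▸ Nat.mul_pos hm1 hh1
  have hdw1 : w1 ∣ w := ⟨n1, by rw [hwn1, mul_comm]⟩
  have hdw2 : w2 ∣ w := ⟨n2, by rw [hwn2, mul_comm]⟩
  have hdh1 : h1 ∣ h := ⟨m1, by rw [hhm1, mul_comm]⟩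
  have hdh2 : h2 ∣ h := ⟨m2, by rw [hhm2, mul_comm]⟩
  have hw1le : w1 ≤ w := Nat.le_of_dvd hw hdw1
  have hw2le : w2 ≤ w := Nat.le_of_dvd hw hdw2
  have hh1le : h1 ≤ h := Nat.le_of_dvd hh hdh1
  have hh2le : h2 ≤ h := Nat.le_of_dvd hh hdh2
  set gw := Nat.gcd w1 w2 with hgw
  set gh := Nat.gcd h1 h2 with hgh
  have hgwpos : 0 < gw := Nat.gcd_pos_of_pos_left _ hw1
  have hghpos : 0 < gh := Nat.gcd_pos_of_pos_left _ hh1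
  -- periodicity of one row/column with period w1 / w2 / h1 / h2
  have hper1 : ∀ x < w, ∀ y < h, q x y = q (x % w1) y := by
    intro x hx y hy
    rw [hq1 x hx y hy, hq1 (x % w1) (lt_of_lt_of_le (Nat.mod_lt x hw1) hw1le) y hy,
      Nat.mod_mod_of_dvd x (dvd_refl w1)]
  have hper2 : ∀ x < w, ∀ y < h, q x y = q (x % w2) y := by
    intro x hx y hy
    rw [hq2 x hx y hy, hq2 (x % w2) (lt_of_lt_of_le (Nat.mod_lt x hw2) hw2le) y hy,
      Nat.mod_mod_of_dvd x (dvd_refl w2)]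
  have hver1 : ∀ x < w, ∀ y < h, q x y = q x (y % h1) := by
    intro x hx y hy
    rw [hq1 x hx y hy, hq1 x hx (y % h1) (lt_of_lt_of_le (Nat.mod_lt y hh1) hh1le),
      Nat.mod_mod_of_dvd y (dvd_refl h1)]
  have hver2 : ∀ x < w, ∀ y < h, q x y = q x (y % h2) := by
    intro x hx y hy
    rw [hq2 x hx y hy, hq2 x hx (y % h2) (lt_of_lt_of_le (Nat.mod_lt y hh2) hh2le),
      Nat.mod_mod_of_dvd y (dvd_refl h2)]
  -- horizontal gcd-periodicity
  have hhor : ∀ x < w, ∀ y < h, q x y = q (x % gw) y := by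
    intro x hx y hy
    exact key_gcd hw w1 w2 hdw1 hdw2 (fun x => q x y)
      (fun x hx => hper1 x hx y hy) (fun x hx => hper2 x hx y hy) x hx
  -- vertical gcd-periodicity
  have hvert : ∀ x < w, ∀ y < h, q x y = q x (y % gh) := by
    intro x hx y hy
    exact key_gcd hh h1 h2 hdh1 hdh2 (fun y => q x y)
      (fun y hy => hver1 x hx y hy) (fun y hy => hver2 x hx y hy) y hy
  -- the combined statement: q x y = q (x % gw) (y % gh)
  have hcomb : ∀ x < w, ∀ y < h, q x y = q (x % gw) (y % gh) := by
    intro x hx y hy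
    rw [hhor x hx y hy,
      hvert (x % gw) (lt_of_le_of_lt (Nat.mod_le _ _) hx) y hy]
  refine ⟨gw, gh, q, ?_, ?_⟩
  · obtain ⟨a, ha⟩ := Nat.gcd_dvd_left w1 w2
    obtain ⟨b, hb⟩ := Nat.gcd_dvd_left h1 h2
    refine ⟨hgwpos, hghpos, ⟨a, ?_, by rw [ha, mul_comm]⟩, ⟨b, ?_, by rw [hb, mul_comm]⟩, ?_⟩
    · rcases Nat.eq_zero_or_pos a with h0 | h0
      · exfalso; rw [h0, mul_zero] at ha; omega
      · exact h0
    · rcases Nat.eq_zero_or_pos b with h0 | h0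
      · exfalso; rw [h0, mul_zero] at hb; omega
      · exact h0
    · intro x hx y hy
      have hx' : x < w := lt_of_lt_of_le hx hw1le
      have hy' : y < h := lt_of_lt_of_le hy hh1le
      have : r1 x y = q x y := by
        rw [hq1 x hx' y hy', Nat.mod_eq_of_lt hx, Nat.mod_eq_of_lt hy]
      rw [this, hcomb x hx' y hy']
  · obtain ⟨a, ha⟩ := Nat.gcd_dvd_right w1 w2
    obtain ⟨b, hb⟩ := Nat.gcd_dvd_right h1 h2
    refine ⟨hgwpos, hghpos, ⟨a, ?_, by rw [ha, mul_comm]⟩, ⟨b, ?_, by rw [hb, mul_comm]⟩, ?_⟩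
    · rcases Nat.eq_zero_or_pos a with h0 | h0
      · exfalso; rw [h0, mul_zero] at ha; omega
      · exact h0
    · rcases Nat.eq_zero_or_pos b with h0 | h0
      · exfalso; rw [h0, mul_zero] at hb; omega
      · exact h0
    · intro x hx y hy
      have hx' : x < w := lt_of_lt_of_le hx hw2le
      have hy' : y < h := lt_of_lt_of_le hy hh2le
      have : r2 x y = q x y := by
        rw [hq2 x hx' y hy', Nat.mod_eq_of_lt hx, Nat.mod_eq_of_lt hy]
      rw [this, hcomb x hx' y hy']
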